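/- Let C be a nonempty finite set, π : C → (0,1] a probability weight function with Σ_c π(c) = 1, and for each c ∈ C let R(c) ⊆ ℝ_{>0} be a convex set. Define A = { 1/(Σ_{c} π(c)·r(c)) : r(c) ∈ R(c) for all c }. Then A is convex. Specifically, if x = 1/E[r_x] and y = 1/E[r_y] with E[r] := Σ_c π(c) r(c), then for α ∈ [0,1], setting α' = αx/(αx + (1−α)y), one has αx + (1−α)y = 1/E[α' r_x + (1−α') r_y]. -/

import Mathlib

private lemma sum_lin (C : Type*) [Fintype C] (π rx ry : C → ℝ) (a b : ℝ) :
    ∑ c, π c * (a * rx c + b * ry c)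
      = a * ∑ c, π c * rx c + b * ∑ c, π c * ry c := by
  rw [Finset.mul_sum, Finset.mul_sum, ← Finset.sum_add_distrib]
  exact Finset.sum_congr rfl (fun c _ => by ring)

private lemma key (Sx Sy α : ℝ) (hSx : 0 < Sx) (hSy : 0 < Sy)
    (h0 : 0 ≤ α) (h1 : α ≤ 1) :
    α * (1 / Sx) + (1 - α) * (1 / Sy)
      = 1 / ((α * (1 / Sx) / (α * (1 / Sx) + (1 - α) * (1 / Sy))) * Sx
          + (1 - α * (1 / Sx) / (α * (1 / Sx) + (1 - α) * (1 / Sy))) * Sy) := by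
  have hD : 0 < α * (1 / Sx) + (1 - α) * (1 / Sy) := by
    rcases eq_or_lt_of_le h0 with h | h
    · simp [← h]; positivity
    · have : 0 < α * (1 / Sx) := by positivity
      have h2 : 0 ≤ (1 - α) * (1 / Sy) := by
        have := sub_nonneg.mpr h1; positivity
      linarith
  have hN : 0 < α * Sy + (1 - α) * Sx := by
    rcases eq_or_lt_of_le h0 with h | h
    · simp [← h]; positivity
    · have : 0 < α * Sy := by positivity
      have h2 : 0 ≤ (1 - α) * Sx := by
        have := sub_nonneg.mpr h1; positivity
      linarith
  have hE : (α * (1 / Sx) / (α * (1 / Sx) + (1 - α) * (1 / Sy))) * Sx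
      + (1 - α * (1 / Sx) / (α * (1 / Sx) + (1 - α) * (1 / Sy))) * Sy
      = 1 / (α * (1 / Sx) + (1 - α) * (1 / Sy)) := by
    rw [eq_div_iff hD.ne']
    have hN' : α * Sy + Sx * (1 - α) ≠ 0 := ne_of_gt (by linarith [hN])
    field_simp [hSx.ne', hSy.ne', hN.ne', hN']
    ring
  rw [hE, one_div_one_div]

theorem stmt_10 (C : Type*) [Fintype C] [Nonempty C]
    (π : C → ℝ) (hπ : ∀ c, 0 < π c ∧ π c ≤ 1) (hsum : ∑ c, π c = 1)
    (R : C → Set ℝ) (hRpos : ∀ c, R c ⊆ Set.Ioi 0) (hRconv : ∀ c, Convex ℝ (R c)) :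
    Convex ℝ {x : ℝ | ∃ r : C → ℝ, (∀ c, r c ∈ R c) ∧ x = 1 / ∑ c, π c * r c} ∧
      ∀ rx ry : C → ℝ, (∀ c, rx c ∈ R c) → (∀ c, ry c ∈ R c) →
        ∀ α : ℝ, α ∈ Set.Icc (0 : ℝ) 1 →
          α * (1 / ∑ c, π c * rx c) + (1 - α) * (1 / ∑ c, π c * ry c)
            = 1 / ∑ c, π c *
                ((α * (1 / ∑ c', π c' * rx c') /
                    (α * (1 / ∑ c', π c' * rx c') + (1 - α) * (1 / ∑ c', π c' * ry c')))
                    * rx c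
                  + (1 - α * (1 / ∑ c', π c' * rx c') /
                      (α * (1 / ∑ c', π c' * rx c') + (1 - α) * (1 / ∑ c', π c' * ry c')))
                    * ry c) := by
  have hSpos : ∀ r : C → ℝ, (∀ c, r c ∈ R c) → 0 < ∑ c, π c * r c := by
    intro r hr
    apply Finset.sum_pos
    · intro c _
      exact mul_pos (hπ c).1 (hRpos c (hr c))
    · exact Finset.univ_nonempty
  have main : ∀ rx ry : C → ℝ, (∀ c, rx c ∈ R c) → (∀ c, ry c ∈ R c) →
      ∀ α : ℝ, α ∈ Set.Icc (0 : ℝ) 1 →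
        α * (1 / ∑ c, π c * rx c) + (1 - α) * (1 / ∑ c, π c * ry c)
          = 1 / ∑ c, π c *
              ((α * (1 / ∑ c', π c' * rx c') /
                  (α * (1 / ∑ c', π c' * rx c') + (1 - α) * (1 / ∑ c', π c' * ry c')))
                  * rx c
                + (1 - α * (1 / ∑ c', π c' * rx c') /
                    (α * (1 / ∑ c', π c' * rx c') + (1 - α) * (1 / ∑ c', π c' * ry c')))
                  * ry c) := by
    intro rx ry hrx hry α hα
    rw [sum_lin]
    exact key _ _ α (hSpos rx hrx) (hSpos ry hry) hα.1 hα.2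
  refine ⟨?_, main⟩
  rintro x ⟨rx, hrx, rfl⟩ y ⟨ry, hry, rfl⟩ a b ha hb hab
  have hb' : b = 1 - a := by linarith
  subst hb'
  have hmem : a ∈ Set.Icc (0 : ℝ) 1 := ⟨ha, by linarith⟩
  set Sx := ∑ c, π c * rx c with hSx
  set Sy := ∑ c, π c * ry c with hSy
  have hSxp := hSpos rx hrx
  have hSyp := hSpos ry hry
  set α' := a * (1 / Sx) / (a * (1 / Sx) + (1 - a) * (1 / Sy)) with hα'
  have hD : 0 < a * (1 / Sx) + (1 - a) * (1 / Sy) := by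
    rcases eq_or_lt_of_le ha with h | h
    · simp [← h]; positivity
    · have : 0 < a * (1 / Sx) := by positivity
      have h2 : 0 ≤ (1 - a) * (1 / Sy) := by positivity
      linarith
  have hα'0 : 0 ≤ α' := by
    apply div_nonneg _ hD.le
    positivity
  have hα'1 : α' ≤ 1 := by
    rw [hα', div_le_one hD]
    have : 0 ≤ (1 - a) * (1 / Sy) := by positivity
    linarith
  refine ⟨fun c => α' * rx c + (1 - α') * ry c, fun c => ?_, ?_⟩
  · exact hRconv c (hrx c) (hry c) hα'0 (by linarith) (by ring)
  · simp only [smul_eq_mul, hα']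
    exact main rx ry hrx hry a hmem
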